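/- (Algebraic core of Theorem 5.9, reducibility_atomic.) Let A and B be abelian groups such that every additive endomorphism of A that factors through B is nilpotent. Then for every bijective additive endomorphism f of A × B, both block components f_AA and f_BB are automorphisms of A and B respectively. -/

import Mathlib

/-- The block components of an additive endomorphism of `A × B`. -/
def blockAA {A B : Type*} [AddCommGroup A] [AddCommGroup B] (f : A × B →+ A × B) : A →+ A :=
  (AddMonoidHom.fst A B).comp (f.comp (AddMonoidHom.inl A B))

def blockBB {A B : Type*} [AddCommGroup A] [AddCommGroup B] (f : A × B →+ A × B) : B →+ B :=
  (AddMonoidHom.snd A B).comp (f.comp (AddMonoidHom.inr A B))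

/-- View an additive endomorphism as an element of the endomorphism monoid, so that
powers make sense. -/
def toEnd {A : Type*} [AddCommGroup A] (e : A →+ A) : AddMonoid.End A := e

/-- An additive endomorphism is nilpotent if `e^k = 0` for some `k ≥ 1`. -/
def IsNilpotentEnd {A : Type*} [AddCommGroup A] (e : A →+ A) : Prop :=
  ∃ k : ℕ, 1 ≤ k ∧ toEnd e ^ k = 0

section Aux

variable {A B : Type*} [AddCommGroup A] [AddCommGroup B]

lemma toEnd_pow_apply (e : A →+ A) (k : ℕ) (x : A) :
    (toEnd e ^ (k + 1)) x = (toEnd e ^ k) (e x) := by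
  rw [pow_succ]; rfl

lemma swap_pow (u : A →+ B) (v : B →+ A) (k : ℕ) (x : B) :
    (toEnd (u.comp v) ^ (k + 1)) x = u ((toEnd (v.comp u) ^ k) (v x)) := by
  induction k generalizing x with
  | zero => simp [toEnd_pow_apply]; rfl
  | succ k ih =>
    rw [toEnd_pow_apply, ih, toEnd_pow_apply]
    rfl

lemma swap_nilpotent (u : A →+ B) (v : B →+ A) (h : IsNilpotentEnd (v.comp u)) :
    IsNilpotentEnd (u.comp v) := by
  obtain ⟨k, -, hk⟩ := h
  refine ⟨k + 1, Nat.le_add_left 1 k, AddMonoidHom.ext fun x => ?_⟩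
  change (toEnd (u.comp v) ^ (k + 1)) x = (0 : B)
  rw [swap_pow, hk, AddMonoid.End.zero_apply, map_zero]

lemma unit_of_nil (e : A →+ A) (h : IsNilpotentEnd e) : IsUnit (1 - toEnd e) := by
  obtain ⟨k, -, hk⟩ := h
  exact IsNilpotent.isUnit_one_sub ⟨k, hk⟩

lemma isUnit_bijective {x : AddMonoid.End A} (h : IsUnit x) : Function.Bijective x := by
  obtain ⟨u, rfl⟩ := h
  refine Function.bijective_iff_has_inverse.mpr ⟨(↑u⁻¹ : AddMonoid.End A), fun a => ?_, fun a => ?_⟩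
  · exact congrArg (fun h : AddMonoid.End A => h a) u.inv_mul
  · exact congrArg (fun h : AddMonoid.End A => h a) u.mul_inv

lemma key1 (p q : A × B →+ A × B) (h : ∀ x, p (q x) = x) (a : A) :
    blockAA p (blockAA q a)
      + ((AddMonoidHom.fst A B).comp (p.comp (AddMonoidHom.inr A B)))
        (((AddMonoidHom.snd A B).comp (q.comp (AddMonoidHom.inl A B))) a) = a := by
  have h2 : q (a, 0) = ((q (a, 0)).1, 0) + (0, (q (a, 0)).2) := by simp
  have := h (a, 0)
  rw [h2, map_add] at this
  have := congrArg Prod.fst this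
  simpa [blockAA] using this

lemma key2 (p q : A × B →+ A × B) (h : ∀ x, p (q x) = x) (b : B) :
    blockBB p (blockBB q b)
      + ((AddMonoidHom.snd A B).comp (p.comp (AddMonoidHom.inl A B)))
        (((AddMonoidHom.fst A B).comp (q.comp (AddMonoidHom.inr A B))) b) = b := by
  have h2 : q (0, b) = ((q (0, b)).1, 0) + (0, (q (0, b)).2) := by simp
  have := h (0, b)
  rw [h2, map_add] at this
  have := congrArg Prod.snd this
  simpa [blockBB, add_comm] using this

end Aux

theorem blocks_bijective_of_nilpotent_factorizations {A B : Type*}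
    [AddCommGroup A] [AddCommGroup B]
    (hnil : ∀ e : A →+ A, (∃ (u : A →+ B) (v : B →+ A), e = v.comp u) → IsNilpotentEnd e)
    (f : A × B →+ A × B) (hf : Function.Bijective f) :
    Function.Bijective (blockAA f) ∧ Function.Bijective (blockBB f) := by
  set G := AddEquiv.ofBijective f hf with hG
  set g : A × B →+ A × B := (G.symm : A × B →+ A × B) with hg
  have hgf : ∀ x, g (f x) = x := fun x => G.symm_apply_apply x
  have hfg : ∀ x, f (g x) = x := fun x => G.apply_symm_apply x
  set fAB : B →+ A := (AddMonoidHom.fst A B).comp (f.comp (AddMonoidHom.inr A B))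
  set gAB : B →+ A := (AddMonoidHom.fst A B).comp (g.comp (AddMonoidHom.inr A B))
  set fBA : A →+ B := (AddMonoidHom.snd A B).comp (f.comp (AddMonoidHom.inl A B))
  set gBA : A →+ B := (AddMonoidHom.snd A B).comp (g.comp (AddMonoidHom.inl A B))
  -- nilpotent endomorphisms of A
  have n1 : IsNilpotentEnd (gAB.comp fBA) := hnil _ ⟨fBA, gAB, rfl⟩
  have n2 : IsNilpotentEnd (fAB.comp gBA) := hnil _ ⟨gBA, fAB, rfl⟩
  -- swapped, nilpotent endomorphisms of B
  have m1 : IsNilpotentEnd (fBA.comp gAB) := swap_nilpotent fBA gAB n1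
  have m2 : IsNilpotentEnd (gBA.comp fAB) := swap_nilpotent gBA fAB n2
  -- A side
  have hA1 : toEnd (blockAA g) * toEnd (blockAA f) = 1 - toEnd (gAB.comp fBA) := by
    refine AddMonoidHom.ext fun a => ?_
    have := key1 g f hgf a
    change blockAA g (blockAA f a) = a - gAB (fBA a)
    rw [eq_sub_iff_add_eq]
    exact this
  have hA2 : toEnd (blockAA f) * toEnd (blockAA g) = 1 - toEnd (fAB.comp gBA) := by
    refine AddMonoidHom.ext fun a => ?_
    have := key1 f g hfg a
    change blockAA f (blockAA g a) = a - fAB (gBA a)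
    rw [eq_sub_iff_add_eq]
    exact this
  have bA1 : Function.Bijective (toEnd (blockAA g) * toEnd (blockAA f)) :=
    isUnit_bijective (hA1 ▸ unit_of_nil (gAB.comp fBA) n1)
  have bA2 : Function.Bijective (toEnd (blockAA f) * toEnd (blockAA g)) :=
    isUnit_bijective (hA2 ▸ unit_of_nil (fAB.comp gBA) n2)
  -- B side
  have hB1 : toEnd (blockBB g) * toEnd (blockBB f) = 1 - toEnd (gBA.comp fAB) := by
    refine AddMonoidHom.ext fun b => ?_
    have := key2 g f hgf b
    change blockBB g (blockBB f b) = b - gBA (fAB b)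
    rw [eq_sub_iff_add_eq]
    exact this
  have hB2 : toEnd (blockBB f) * toEnd (blockBB g) = 1 - toEnd (fBA.comp gAB) := by
    refine AddMonoidHom.ext fun b => ?_
    have := key2 f g hfg b
    change blockBB f (blockBB g b) = b - fBA (gAB b)
    rw [eq_sub_iff_add_eq]
    exact this
  have bB1 : Function.Bijective (toEnd (blockBB g) * toEnd (blockBB f)) :=
    isUnit_bijective (hB1 ▸ unit_of_nil (gBA.comp fAB) m2)
  have bB2 : Function.Bijective (toEnd (blockBB f) * toEnd (blockBB g)) :=
    isUnit_bijective (hB2 ▸ unit_of_nil (fBA.comp gAB) m1)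
  constructor
  · constructor
    · intro x y hxy
      exact bA1.1 (congrArg (blockAA g) hxy)
    · intro y
      obtain ⟨x, hx⟩ := bA2.2 y
      exact ⟨blockAA g x, hx⟩
  · constructor
    · intro x y hxy
      exact bB1.1 (congrArg (blockBB g) hxy)
    · intro y
      obtain ⟨x, hx⟩ := bB2.2 y
      exact ⟨blockBB g x, hx⟩
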